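/- arXiv:2111.07465 — 5 statements merged into one kernel-verified Lean document; each statement's English description precedes it below -/
import Mathlib

section
/- Let n, p be positive integers, E ⊆ {1, …, n}, and let A_1, …, A_p be n×n real matrices such that (A_l)_{ij} = 0 whenever i ∈ E and j ∉ E, for every l = 1, …, p. Define the moving-average coefficient matrices by φ_0 = I_n, φ_s = 0 for s < 0, and φ_s = A_1 φ_{s−1} + A_2 φ_{s−2} + ⋯ + A_p φ_{s−p} for s ≥ 1. Then (φ_s)_{ij} = 0 for every s ≥ 0, every i ∈ E, and every j ∉ E. Consequently, for any vector v ∈ ℝⁿ with v_j = 0 for all j ∈ E, one has e_iᵀ φ_s v = 0 for every i ∈ E and every s ≥ 0, and hence ∑_{s=0}^{h−1} (e_iᵀ φ_s v)² = 0 for every h. -/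
open Matrix Filter Topology

/-- Theorem 2 of the paper: if each VAR coefficient matrix `A l`
has the exogenous/endogenous pattern (`(A l) i j = 0` for `i ∈ E`, `j ∉ E`),
then the moving-average matrices `φ_s` (with `φ_0 = I`, `φ_s = 0` for `s < 0`,
and `φ_s = ∑_l A_l φ_{s-l}` for `s ≥ 1`) have the same pattern; consequently,
for every vector `v` vanishing on `E` and every `i ∈ E`, `e_iᵀ φ_s v = 0` for
all `s`, and `∑_{s<h} (e_iᵀ φ_s v)² = 0` for every `h`. -/
theorem ma_matrices_inherit_exo_endo_pattern
    (n p : ℕ) (hn : 0 < n) (hp : 0 < p)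
    (E : Set (Fin n))
    (A : Fin p → Matrix (Fin n) (Fin n) ℝ)
    (hA : ∀ (l : Fin p) (i j : Fin n), i ∈ E → j ∉ E → A l i j = 0)
    (φ : ℕ → Matrix (Fin n) (Fin n) ℝ)
    (hφ0 : φ 0 = 1)
    (hφrec : ∀ s : ℕ,
      φ (s + 1) = ∑ l : Fin p, if (l : ℕ) ≤ s then A l * φ (s - (l : ℕ)) else 0) :
    (∀ (s : ℕ) (i j : Fin n), i ∈ E → j ∉ E → φ s i j = 0) ∧
      (∀ v : Fin n → ℝ, (∀ j ∈ E, v j = 0) →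
        ∀ i ∈ E,
          (∀ s : ℕ, (φ s).mulVec v i = 0) ∧
          (∀ h : ℕ, ∑ s ∈ Finset.range h, ((φ s).mulVec v i) ^ 2 = 0)) := by
  have key : ∀ (s : ℕ) (i j : Fin n), i ∈ E → j ∉ E → φ s i j = 0 := by
    intro s
    induction s using Nat.strong_induction_on with
    | _ s ih =>
      intro i j hi hj
      match s with
      | 0 =>
        simp [hφ0, Matrix.one_apply]
        intro h; exact absurd (h ▸ hi) hj
      | s + 1 =>
        rw [hφrec s]
        rw [Matrix.sum_apply]
        apply Finset.sum_eq_zero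
        intro l _
        by_cases hl : (l : ℕ) ≤ s
        · simp only [if_pos hl, Matrix.mul_apply]
          apply Finset.sum_eq_zero
          intro k _
          by_cases hk : k ∈ E
          · rw [ih (s - (l : ℕ)) (by omega) k j hk hj, mul_zero]
          · rw [hA l i k hi hk, zero_mul]
        · simp [hl]
  refine ⟨key, ?_⟩
  intro v hv i hi
  have hmv : ∀ s : ℕ, (φ s).mulVec v i = 0 := by
    intro s
    unfold Matrix.mulVec dotProduct
    apply Finset.sum_eq_zero
    intro j _
    by_cases hj : j ∈ E
    · rw [hv j hj, mul_zero]
    · show φ s i j * v j = 0; rw [key s i j hi hj, zero_mul]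
  exact ⟨hmv, fun h => Finset.sum_eq_zero fun s _ => by rw [hmv s]; ring⟩
end

section
/- Let F be an n×n diagonal real matrix with strictly positive diagonal entries, let φ_s (s = 0, 1, 2, …) be n×n real matrices, and let L be an n×n real matrix. Define φ̃_s = F φ_s F⁻¹ and L̃ = F L. Then for every i, j and every s, e_iᵀ φ̃_s (L̃ e_j) = F_{ii} · e_iᵀ φ_s (L e_j); consequently, for every h, ∑_{s=0}^{h−1} (e_iᵀ φ̃_s L̃ e_j)² = (F_{ii})² ∑_{s=0}^{h−1} (e_iᵀ φ_s L e_j)², and whenever ∑_{s=0}^{h−1} ∑_{z=1}^n (e_iᵀ φ_s L e_z)² ≠ 0 the variance-share ratios coincide: (∑_{s=0}^{h−1} (e_iᵀ φ̃_s L̃ e_j)²) / (∑_{s=0}^{h−1} ∑_{z=1}^n (e_iᵀ φ̃_s L̃ e_z)²) = (∑_{s=0}^{h−1} (e_iᵀ φ_s L e_j)²) / (∑_{s=0}^{h−1} ∑_{z=1}^n (e_iᵀ φ_s L e_z)²). -/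
open Matrix Filter Topology

/-- core of Theorem 3 of the paper: rescaling by a positive
diagonal matrix `F` (so `φ̃_s = F φ_s F⁻¹`, `L̃ = F L`) multiplies
`e_iᵀ φ_s (L e_j)` by `F i i`; hence the partial sums of squares are scaled by
`(F i i)²` and the variance-share ratios are unchanged. -/
theorem variance_shares_invariant_under_diagonal_rescaling
    (n : ℕ) (hn : 0 < n)
    (F : Matrix (Fin n) (Fin n) ℝ)
    (hFdiag : ∀ i j : Fin n, i ≠ j → F i j = 0)
    (hFpos : ∀ i : Fin n, 0 < F i i)
    (φ : ℕ → Matrix (Fin n) (Fin n) ℝ)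
    (L : Matrix (Fin n) (Fin n) ℝ) :
    (∀ (i j : Fin n) (s : ℕ),
        (F * φ s * F⁻¹ * (F * L)) i j = F i i * ((φ s * L) i j)) ∧
    (∀ (i j : Fin n) (h : ℕ),
        ∑ s ∈ Finset.range h, ((F * φ s * F⁻¹ * (F * L)) i j) ^ 2 =
          (F i i) ^ 2 * ∑ s ∈ Finset.range h, ((φ s * L) i j) ^ 2) ∧
    (∀ (i j : Fin n) (h : ℕ),
        (∑ s ∈ Finset.range h, ∑ z : Fin n, ((φ s * L) i z) ^ 2) ≠ 0 →
        (∑ s ∈ Finset.range h, ((F * φ s * F⁻¹ * (F * L)) i j) ^ 2) /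
            (∑ s ∈ Finset.range h, ∑ z : Fin n, ((F * φ s * F⁻¹ * (F * L)) i z) ^ 2) =
          (∑ s ∈ Finset.range h, ((φ s * L) i j) ^ 2) /
            (∑ s ∈ Finset.range h, ∑ z : Fin n, ((φ s * L) i z) ^ 2)) := by
  have hF : F = Matrix.diagonal (fun i => F i i) := by
    ext i j
    by_cases h : i = j
    · subst h; simp [Matrix.diagonal]
    · simp [Matrix.diagonal, h, hFdiag i j h]
  have hdet : F.det ≠ 0 := by
    rw [hF, Matrix.det_diagonal]
    exact Finset.prod_ne_zero_iff.2 fun i _ => (hFpos i).ne'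
  have hinv : F⁻¹ * F = 1 := Matrix.nonsing_inv_mul F (isUnit_iff_ne_zero.2 hdet)
  have key : ∀ s : ℕ, F * φ s * F⁻¹ * (F * L) = F * (φ s * L) := by
    intro s
    calc F * φ s * F⁻¹ * (F * L) = F * φ s * (F⁻¹ * F) * L := by
          simp only [Matrix.mul_assoc]
      _ = F * (φ s * L) := by rw [hinv]; simp [Matrix.mul_assoc]
  have entry : ∀ (i j : Fin n) (s : ℕ),
      (F * φ s * F⁻¹ * (F * L)) i j = F i i * ((φ s * L) i j) := by
    intro i j s
    rw [key s]
    conv_lhs => rw [hF]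
    rw [Matrix.diagonal_mul]
  refine ⟨entry, ?_, ?_⟩
  · intro i j h
    simp only [entry]
    rw [Finset.mul_sum]
    congr 1; ext s; ring
  · intro i j h hne
    simp only [entry, mul_pow, ← Finset.mul_sum]
    have hFi : (F i i) ^ 2 ≠ 0 := pow_ne_zero 2 (hFpos i).ne'
    rw [mul_div_mul_left _ _ hFi]
end

section
/- Let n ≥ 2 and let Z be an (n−1)×(n−1) real matrix such that I − Z is invertible and (I − Z)⁻¹ has nonnegative entries. Let α, β ∈ ℝ^{n−1} have nonnegative entries, let c ≥ 0, and let 1 denote the all-ones vector in ℝ^{n−1}. Suppose x₀ ∈ ℝ and x ∈ ℝ^{n−1} satisfy the two equations x₀ + 1ᵀ x = 0 and (I − Z) x − x₀ α = −c β. Then x₀ = c · (1ᵀ (I − Z)⁻¹ β) / (1 + 1ᵀ (I − Z)⁻¹ α), this value is nonnegative, and x = (I − Z)⁻¹ (x₀ α − c β). -/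
open Matrix Filter Topology

/-- Theorem 5 of the paper, derivative of the causality
distribution: given an `(n-1)×(n-1)` matrix `Z` with `I - Z` invertible and
`(I - Z)⁻¹` entrywise nonnegative, nonnegative vectors `α, β`, a constant
`c ≥ 0`, and `x₀, x` satisfying `x₀ + 1ᵀ x = 0` and `(I - Z) x - x₀ α = -c β`,
we have the explicit formula
`x₀ = c (1ᵀ (I - Z)⁻¹ β) / (1 + 1ᵀ (I - Z)⁻¹ α) ≥ 0` and
`x = (I - Z)⁻¹ (x₀ α - c β)`. -/
theorem causality_derivative_formula
    (n : ℕ) (hn : 2 ≤ n)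
    (Z : Matrix (Fin (n - 1)) (Fin (n - 1)) ℝ)
    (hinv : IsUnit (1 - Z))
    (hnonneg : ∀ i j : Fin (n - 1), 0 ≤ (1 - Z)⁻¹ i j)
    (α β : Fin (n - 1) → ℝ)
    (hα : ∀ i, 0 ≤ α i) (hβ : ∀ i, 0 ≤ β i)
    (c : ℝ) (hc : 0 ≤ c)
    (x₀ : ℝ) (x : Fin (n - 1) → ℝ)
    (heq1 : x₀ + ∑ i, x i = 0)
    (heq2 : (1 - Z).mulVec x - x₀ • α = -(c • β)) :
    x₀ = c * (∑ i, ((1 - Z)⁻¹.mulVec β) i) / (1 + ∑ i, ((1 - Z)⁻¹.mulVec α) i) ∧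
    0 ≤ x₀ ∧
    x = (1 - Z)⁻¹.mulVec (x₀ • α - c • β) := by
  set A := (1 - Z) with hA
  have hdet : IsUnit A.det := (Matrix.isUnit_iff_isUnit_det A).mp hinv
  have hx : x = A⁻¹.mulVec (x₀ • α - c • β) := by
    have h2 : A.mulVec x = x₀ • α - c • β := by
      rw [sub_eq_iff_eq_add] at heq2
      rw [heq2]; abel
    calc x = (A⁻¹ * A).mulVec x := by rw [Matrix.nonsing_inv_mul A hdet, Matrix.one_mulVec]
    _ = A⁻¹.mulVec (A.mulVec x) := by rw [Matrix.mulVec_mulVec]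
    _ = A⁻¹.mulVec (x₀ • α - c • β) := by rw [h2]
  have hlin : A⁻¹.mulVec (x₀ • α - c • β) = x₀ • A⁻¹.mulVec α - c • A⁻¹.mulVec β := by
    rw [Matrix.mulVec_sub, Matrix.mulVec_smul, Matrix.mulVec_smul]
  set Sα := ∑ i, (A⁻¹.mulVec α) i with hSα
  set Sβ := ∑ i, (A⁻¹.mulVec β) i with hSβ
  have hSαnn : 0 ≤ Sα := by
    apply Finset.sum_nonneg
    intro i _
    simp only [Matrix.mulVec, dotProduct]
    exact Finset.sum_nonneg fun j _ => mul_nonneg (hnonneg i j) (hα j)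
  have hSβnn : 0 ≤ Sβ := by
    apply Finset.sum_nonneg
    intro i _
    simp only [Matrix.mulVec, dotProduct]
    exact Finset.sum_nonneg fun j _ => mul_nonneg (hnonneg i j) (hβ j)
  have hsum : ∑ i, x i = x₀ * Sα - c * Sβ := by
    rw [hx, hlin]
    simp [Finset.sum_sub_distrib, Finset.mul_sum, hSα, hSβ]
  have hden : (0 : ℝ) < 1 + Sα := by linarith
  have hkey : x₀ * (1 + Sα) = c * Sβ := by
    rw [hsum] at heq1; ring_nf; ring_nf at heq1; linarith
  have hx₀ : x₀ = c * Sβ / (1 + Sα) := by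
    field_simp
    linarith [hkey]
  refine ⟨hx₀, ?_, hx⟩
  rw [hx₀]
  exact div_nonneg (mul_nonneg hc hSβnn) hden.le
end

section
/- Let T be an m×m real matrix with nonnegative entries whose row sums are all at most 1, i.e., ∑_{j} T(i,j) ≤ 1 for every i. Suppose there is no nonempty subset S of {1, …, m} such that ∑_{j∈S} T(i,j) = 1 for every i ∈ S. Then the powers of T converge to the zero matrix: T^t → 0 entrywise as t → ∞. -/
open Matrix Filter Topology

/-- Theorem 6 of the paper: if `T` is an `m×m` substochastic
matrix (nonnegative entries, row sums at most `1`) having no nonempty subset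
`S` of indices on which it is stochastic (`∑_{j∈S} T i j = 1` for all `i ∈ S`),
then the powers of `T` converge entrywise to zero. -/
theorem substochastic_no_closed_class_powers_tendsto_zero
    (m : ℕ) (T : Matrix (Fin m) (Fin m) ℝ)
    (hnonneg : ∀ i j : Fin m, 0 ≤ T i j)
    (hrow : ∀ i : Fin m, ∑ j, T i j ≤ 1)
    (hnoclosed : ¬ ∃ S : Finset (Fin m), S.Nonempty ∧
      ∀ i ∈ S, ∑ j ∈ S, T i j = 1) :
    ∀ i j : Fin m, Tendsto (fun t : ℕ => (T ^ t) i j) atTop (𝓝 0) := by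
  classical
  -- entries of powers are nonnegative
  have hpn : ∀ (t : ℕ) (i j : Fin m), 0 ≤ (T ^ t) i j := by
    intro t
    induction t with
    | zero => intro i j; simp [Matrix.one_apply]; positivity
    | succ t ih =>
      intro i j
      rw [pow_succ, Matrix.mul_apply]
      exact Finset.sum_nonneg fun k _ => mul_nonneg (ih i k) (hnonneg k j)
  set f : ℕ → Fin m → ℝ := fun t i => ∑ j, (T ^ t) i j with hf
  have hfnn : ∀ t i, 0 ≤ f t i := fun t i =>
    Finset.sum_nonneg fun j _ => hpn t i j
  -- decomposition of row sums
  have hdec : ∀ (s t : ℕ) (i : Fin m), f (s + t) i = ∑ j, (T ^ s) i j * f t j := by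
    intro s t i
    simp only [hf, pow_add, Matrix.mul_apply]
    rw [Finset.sum_comm]
    simp [Finset.mul_sum]
  have hle1 : ∀ t i, f t i ≤ 1 := by
    intro t
    induction t with
    | zero => intro i; simp [hf, Matrix.one_apply]
    | succ t ih =>
      intro i
      have : f (1 + t) i = ∑ j, T i j * f t j := by
        simpa [pow_one] using hdec 1 t i
      rw [Nat.add_comm t 1, this]
      calc ∑ j, T i j * f t j ≤ ∑ j, T i j * 1 :=
            Finset.sum_le_sum fun j _ => mul_le_mul_of_nonneg_left (ih j) (hnonneg i j)
        _ ≤ 1 := by simpa using hrow i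
  -- monotonicity
  have hmono : ∀ (s t : ℕ) (i : Fin m), f (s + t) i ≤ f s i := by
    intro s t i
    rw [hdec]
    calc ∑ j, (T ^ s) i j * f t j ≤ ∑ j, (T ^ s) i j * 1 :=
          Finset.sum_le_sum fun j _ => mul_le_mul_of_nonneg_left (hle1 t j) (hpn s i j)
      _ = f s i := by simp [hf]
  -- every index eventually drops below 1
  have hdrop : ∀ i : Fin m, ∃ t, f t i < 1 := by
    intro i
    by_contra h
    push_neg at h
    -- build the closed set
    apply hnoclosed
    refine ⟨Finset.univ.filter (fun j => ∀ t, f t j = 1), ?_, ?_⟩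
    · refine ⟨i, ?_⟩
      simp only [Finset.mem_filter, Finset.mem_univ, true_and]
      intro t; exact le_antisymm (hle1 t i) (h t)
    · intro a ha
      simp only [Finset.mem_filter, Finset.mem_univ, true_and] at ha
      -- T a j = 0 for j not in S
      have hzero : ∀ j : Fin m, (∃ t, f t j ≠ 1) → T a j = 0 := by
        intro j ⟨t, hj⟩
        have hlt : f t j < 1 := lt_of_le_of_ne (hle1 t j) hj
        have h1 : f (1 + t) a = ∑ k, T a k * f t k := by simpa [pow_one] using hdec 1 t a
        have h2 : (∑ k, T a k * f t k) = 1 := by rw [← h1, ha]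
        have h3 : (∑ k, T a k) = 1 := by simpa [hf, pow_one] using ha 1
        have h4 : ∑ k, T a k * (1 - f t k) = 0 := by
          simp only [mul_sub, mul_one, Finset.sum_sub_distrib]
          rw [h2, h3]; ring
        have h5 : T a j * (1 - f t j) = 0 := by
          have := Finset.sum_eq_zero_iff_of_nonneg (fun k _ =>
            mul_nonneg (hnonneg a k) (by linarith [hle1 t k])) |>.mp h4 j (Finset.mem_univ j)
          exact this
        rcases mul_eq_zero.mp h5 with h | h
        · exact h
        · exfalso; linarith
      have h3 : (∑ k, T a k) = 1 := by simpa [hf, pow_one] using ha 1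
      calc ∑ j ∈ Finset.univ.filter (fun j => ∀ t, f t j = 1), T a j
            = ∑ k, T a k := by
              refine Finset.sum_subset (Finset.filter_subset _ _) ?_
              intro j _ hj
              simp only [Finset.mem_filter, Finset.mem_univ, true_and] at hj
              push_neg at hj
              exact hzero j hj
        _ = 1 := h3
  -- a uniform time N at which all row sums drop below 1
  choose g hg using hdrop
  intro i j
  have huniv : (Finset.univ : Finset (Fin m)).Nonempty := ⟨i, Finset.mem_univ i⟩
  set N : ℕ := Finset.univ.sup g + 1 with hNdef
  have hNpos : 0 < N := Nat.succ_pos _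
  have hNall : ∀ k : Fin m, f N k < 1 := by
    intro k
    have hk : g k ≤ N := le_trans (Finset.le_sup (Finset.mem_univ k)) (Nat.le_succ _)
    have : f N k ≤ f (g k) k := by
      have := hmono (g k) (N - g k) k
      rwa [Nat.add_sub_cancel' hk] at this
    exact lt_of_le_of_lt this (hg k)
  set c : ℝ := Finset.univ.sup' huniv (f N) with hcdef
  have hc1 : c < 1 := by
    rw [hcdef, Finset.sup'_lt_iff]
    intro k _; exact hNall k
  have hc0 : 0 ≤ c := le_trans (hfnn N i) (Finset.le_sup' (f N) (Finset.mem_univ i))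
  have hcle : ∀ k, f N k ≤ c := fun k => Finset.le_sup' (f N) (Finset.mem_univ k)
  -- geometric bound
  have hgeo : ∀ t (k : Fin m), f t k ≤ c ^ (t / N) := by
    intro t
    induction t using Nat.strong_induction_on with
    | _ t ih =>
      intro k
      by_cases ht : t < N
      · rw [Nat.div_eq_of_lt ht]
        simpa using hle1 t k
      · push_neg at ht
        have hts : t = N + (t - N) := (Nat.add_sub_cancel' ht).symm
        have hlt : t - N < t := Nat.sub_lt (lt_of_lt_of_le hNpos ht) hNpos
        have hdivq : (t - N) / N + 1 = t / N := by
          rw [← Nat.add_div_right (t - N) hNpos, Nat.sub_add_cancel ht]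
        calc f t k = ∑ l, (T ^ N) k l * f (t - N) l := by nth_rewrite 1 [hts]; exact hdec N (t - N) k
          _ ≤ ∑ l, (T ^ N) k l * c ^ ((t - N) / N) :=
              Finset.sum_le_sum fun l _ =>
                mul_le_mul_of_nonneg_left (ih (t - N) hlt l) (hpn N k l)
          _ = f N k * c ^ ((t - N) / N) := by rw [← Finset.sum_mul]
          _ ≤ c * c ^ ((t - N) / N) :=
              mul_le_mul_of_nonneg_right (hcle k) (pow_nonneg hc0 _)
          _ = c ^ (t / N) := by rw [← hdivq, pow_succ]; ring
  have hdiv : Tendsto (fun t : ℕ => t / N) atTop atTop := by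
    refine tendsto_atTop.mpr fun b => eventually_atTop.mpr ⟨b * N, fun t ht => ?_⟩
    calc b = b * N / N := (Nat.mul_div_cancel b hNpos).symm
      _ ≤ t / N := Nat.div_le_div_right ht
  have hpow : Tendsto (fun t : ℕ => c ^ (t / N)) atTop (𝓝 0) :=
    (tendsto_pow_atTop_nhds_zero_of_lt_one hc0 hc1).comp hdiv
  refine squeeze_zero (fun t => hpn t i j) (fun t => ?_) hpow
  calc (T ^ t) i j ≤ f t i :=
        Finset.single_le_sum (fun l _ => hpn t i l) (Finset.mem_univ j)
    _ ≤ c ^ (t / N) := hgeo t i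
end

section
/- Let Ω be an n×n row-stochastic real matrix and let C and T be disjoint subsets of {1, …, n} such that: (i) Ω(i,j) = 0 for every i ∈ C and j ∉ C (C is closed); and (ii) Ω(k,j) = 0 for every k ∉ C ∪ T and j ∈ C ∪ T. Let Ω_C = (Ω(i,j))_{i,j∈C} and T_e = (Ω(i,j))_{i,j∈T}. Assume that T_e^t → 0 entrywise as t → ∞, and that there is a vector π^c ∈ ℝ^C with nonnegative entries summing to 1 such that (Ω_C)^t converges entrywise, as t → ∞, to the matrix all of whose rows equal π^c. Define b ∈ ℝ^T by b_i = ∑_{j∈C} Ω(i,j) and μ^c = (I − T_e)⁻¹ b. Then for every i ∈ T and j ∈ C, lim_{t→∞} (Ω^t)(i,j) = π^c_j · μ^c_i. -/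
open Matrix Filter Topology

/-- Powers of a substochastic matrix are substochastic. -/
lemma substoch_pow {m : Type*} [Fintype m] [DecidableEq m] (S : Matrix m m ℝ)
    (h0 : ∀ i j, 0 ≤ S i j) (h1 : ∀ i, ∑ j, S i j ≤ 1) (u : ℕ) :
    (∀ i j, 0 ≤ (S ^ u) i j) ∧ ∀ i, ∑ j, (S ^ u) i j ≤ 1 := by
  induction u with
  | zero =>
      constructor
      · intro i j
        rw [pow_zero, Matrix.one_apply]
        split <;> norm_num
      · intro i
        rw [pow_zero]
        simp [Matrix.one_apply]
  | succ u ih =>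
      constructor
      · intro i j
        rw [pow_succ, Matrix.mul_apply]
        exact Finset.sum_nonneg fun k _ => mul_nonneg (ih.1 i k) (h0 k j)
      · intro i
        have : ∑ j, (S ^ (u + 1)) i j = ∑ k, (S ^ u) i k * ∑ j, S k j := by
          simp only [pow_succ, Matrix.mul_apply]
          rw [Finset.sum_comm]
          simp [Finset.mul_sum]
        rw [this]
        calc ∑ k, (S ^ u) i k * ∑ j, S k j ≤ ∑ k, (S ^ u) i k * 1 :=
              Finset.sum_le_sum fun k _ =>
                mul_le_mul_of_nonneg_left (h1 k) (ih.1 i k)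
          _ = ∑ k, (S ^ u) i k := by simp
          _ ≤ 1 := ih.2 i

/-- Theorem 10 of the paper: for a row-stochastic `Ω` with a
closed exogeneity class `C` and a transient class `T` (no other class feeding
into `C ∪ T`), if the powers of `T_e = Ω_T` tend to zero and `(Ω_C)^t`
converges entrywise to the matrix whose rows all equal the probability vector
`π^c`, then for `i ∈ T`, `j ∈ C` the limiting variance share is
`lim_t (Ω^t) i j = π^c_j ⬝ μ^c_i`, where `μ^c = (I - T_e)⁻¹ b` and
`b_i = ∑_{j∈C} Ω i j`. -/
theorem local_causality_distribution
    (n : ℕ) (Ω : Matrix (Fin n) (Fin n) ℝ)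
    (hnonneg : ∀ i j : Fin n, 0 ≤ Ω i j)
    (hrow : ∀ i : Fin n, ∑ j, Ω i j = 1)
    (C T : Finset (Fin n)) (hdisj : Disjoint C T)
    (hC_closed : ∀ i ∈ C, ∀ j ∉ C, Ω i j = 0)
    (houtside : ∀ k : Fin n, k ∉ C → k ∉ T → ∀ j : Fin n, (j ∈ C ∨ j ∈ T) → Ω k j = 0)
    (hTe : ∀ i j : {x // x ∈ T},
      Tendsto
        (fun t : ℕ =>
          ((Ω.submatrix (fun a : {x // x ∈ T} => (a : Fin n))
              (fun a : {x // x ∈ T} => (a : Fin n))) ^ t) i j)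
        atTop (𝓝 0))
    (πc : {x // x ∈ C} → ℝ)
    (hπc_nonneg : ∀ j, 0 ≤ πc j)
    (hπc_sum : ∑ j, πc j = 1)
    (hC_limit : ∀ i j : {x // x ∈ C},
      Tendsto
        (fun t : ℕ =>
          ((Ω.submatrix (fun a : {x // x ∈ C} => (a : Fin n))
              (fun a : {x // x ∈ C} => (a : Fin n))) ^ t) i j)
        atTop (𝓝 (πc j)))
    (b : {x // x ∈ T} → ℝ)
    (hb : ∀ i : {x // x ∈ T}, b i = ∑ j ∈ C, Ω (i : Fin n) j)
    (μc : {x // x ∈ T} → ℝ)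
    (hμc : μc =
      ((1 - Ω.submatrix (fun a : {x // x ∈ T} => (a : Fin n))
          (fun a : {x // x ∈ T} => (a : Fin n)))⁻¹).mulVec b) :
    ∀ (i : {x // x ∈ T}) (j : {x // x ∈ C}),
      Tendsto (fun t : ℕ => (Ω ^ t) (i : Fin n) (j : Fin n)) atTop
        (𝓝 (πc j * μc i)) := by
  intro i j
  set Te : Matrix {x // x ∈ T} {x // x ∈ T} ℝ :=
    Ω.submatrix (fun a : {x // x ∈ T} => (a : Fin n))
      (fun a : {x // x ∈ T} => (a : Fin n)) with hTe_def
  set A : Matrix {x // x ∈ C} {x // x ∈ C} ℝ :=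
    Ω.submatrix (fun a : {x // x ∈ C} => (a : Fin n))
      (fun a : {x // x ∈ C} => (a : Fin n)) with hA_def
  set B : Matrix {x // x ∈ T} {x // x ∈ C} ℝ :=
    Ω.submatrix (fun a : {x // x ∈ T} => (a : Fin n))
      (fun a : {x // x ∈ C} => (a : Fin n)) with hB_def
  -- basic bounds
  have hTe0 : ∀ p q : {x // x ∈ T}, 0 ≤ Te p q := fun p q => hnonneg _ _
  have hA0 : ∀ p q : {x // x ∈ C}, 0 ≤ A p q := fun p q => hnonneg _ _
  have hB0 : ∀ p q, 0 ≤ B p q := fun p q => hnonneg _ _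
  have hsubrow : ∀ (s : Finset (Fin n)) (a : Fin n), ∑ q ∈ s, Ω a q ≤ 1 := by
    intro s a
    calc ∑ q ∈ s, Ω a q ≤ ∑ q, Ω a q :=
          Finset.sum_le_sum_of_subset_of_nonneg (Finset.subset_univ s)
            (fun k _ _ => hnonneg a k)
      _ = 1 := hrow a
  have hTerow : ∀ p : {x // x ∈ T}, ∑ q, Te p q ≤ 1 := by
    intro p
    calc ∑ q, Te p q = ∑ q ∈ T, Ω (p : Fin n) q :=
          Finset.sum_coe_sort T (fun q => Ω (p : Fin n) q)
      _ ≤ 1 := hsubrow T (p : Fin n)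
  have hArow : ∀ p : {x // x ∈ C}, ∑ q, A p q ≤ 1 := by
    intro p
    calc ∑ q, A p q = ∑ q ∈ C, Ω (p : Fin n) q :=
          Finset.sum_coe_sort C (fun q => Ω (p : Fin n) q)
      _ ≤ 1 := hsubrow C (p : Fin n)
  have hBrow : ∀ p : {x // x ∈ T}, ∑ q, B p q ≤ 1 := by
    intro p
    calc ∑ q, B p q = ∑ q ∈ C, Ω (p : Fin n) q :=
          Finset.sum_coe_sort C (fun q => Ω (p : Fin n) q)
      _ ≤ 1 := hsubrow C (p : Fin n)
  have hTp := substoch_pow Te hTe0 hTerow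
  have hAp := substoch_pow A hA0 hArow
  have hApow_le1 : ∀ (u : ℕ) (l m : {x // x ∈ C}), (A ^ u) l m ≤ 1 := fun u l m =>
    le_trans (Finset.single_le_sum (fun k _ => (hAp u).1 l k) (Finset.mem_univ m))
      ((hAp u).2 l)
  have hbB : ∀ p : {x // x ∈ T}, b p = ∑ q, B p q := by
    intro p
    rw [hb p]
    exact (Finset.sum_coe_sort C (fun q => Ω (p : Fin n) q)).symm
  have hb0 : ∀ p, 0 ≤ b p := fun p =>
    (hbB p) ▸ Finset.sum_nonneg fun q _ => hB0 p q
  have hb1 : ∀ p, b p ≤ 1 := fun p => (hbB p) ▸ hBrow p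
  -- outside states never reach C ∪ T
  have haux1 : ∀ (t : ℕ) (k : Fin n), k ∉ C → k ∉ T →
      ∀ jj : Fin n, (jj ∈ C ∨ jj ∈ T) → (Ω ^ t) k jj = 0 := by
    intro t
    induction t with
    | zero =>
        intro k hkC hkT jj hjj
        rw [pow_zero]
        apply Matrix.one_apply_ne
        rintro rfl
        rcases hjj with h | h
        exacts [hkC h, hkT h]
    | succ t ih =>
        intro k hkC hkT jj hjj
        rw [pow_succ', Matrix.mul_apply]
        apply Finset.sum_eq_zero
        intro l _
        by_cases hl : l ∈ C ∨ l ∈ T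
        · rw [houtside k hkC hkT l hl, zero_mul]
        · push_neg at hl
          rw [ih l hl.1 hl.2 jj hjj, mul_zero]
  -- C is closed for all powers
  have haux2 : ∀ (t : ℕ) (k : Fin n), k ∈ C → ∀ jj : Fin n, jj ∉ C → (Ω ^ t) k jj = 0 := by
    intro t
    induction t with
    | zero =>
        intro k hk jj hjj
        rw [pow_zero]
        apply Matrix.one_apply_ne
        rintro rfl
        exact hjj hk
    | succ t ih =>
        intro k hk jj hjj
        rw [pow_succ', Matrix.mul_apply]
        apply Finset.sum_eq_zero
        intro l _
        by_cases hl : l ∈ C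
        · rw [ih l hl jj hjj, mul_zero]
        · rw [hC_closed k hk l hl, zero_mul]
  -- powers of Ω restricted to C are powers of A
  have haux3 : ∀ (t : ℕ) (k jj : {x // x ∈ C}),
      (Ω ^ t) (k : Fin n) (jj : Fin n) = (A ^ t) k jj := by
    intro t
    induction t with
    | zero =>
        intro k jj
        rw [pow_zero, pow_zero]
        by_cases h : k = jj
        · subst h; simp [Matrix.one_apply]
        · rw [Matrix.one_apply_ne h, Matrix.one_apply_ne]
          exact fun hc => h (Subtype.ext hc)
    | succ t ih =>
        intro k jj
        rw [pow_succ', Matrix.mul_apply]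
        have h1 : ∑ l, Ω (k : Fin n) l * (Ω ^ t) l (jj : Fin n)
            = ∑ l ∈ C, Ω (k : Fin n) l * (Ω ^ t) l (jj : Fin n) := by
          refine (Finset.sum_subset (Finset.subset_univ C) ?_).symm
          intro l _ hl
          rw [hC_closed (k : Fin n) k.2 l hl, zero_mul]
        rw [h1, ← Finset.sum_coe_sort C (fun l => Ω (k : Fin n) l * (Ω ^ t) l (jj : Fin n))]
        have h2 : ∀ l : {x // x ∈ C},
            Ω (k : Fin n) (l : Fin n) * (Ω ^ t) (l : Fin n) (jj : Fin n)
              = A k l * (A ^ t) l jj := by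
          intro l; rw [ih l jj]; rfl
        rw [Finset.sum_congr rfl (fun l _ => h2 l), ← Matrix.mul_apply, ← pow_succ']
  -- the basic recursion
  have hrec : ∀ (t : ℕ) (p : {x // x ∈ T}) (q : {x // x ∈ C}),
      (Ω ^ (t + 1)) (p : Fin n) (q : Fin n)
        = (∑ k : {x // x ∈ T}, Te p k * (Ω ^ t) (k : Fin n) (q : Fin n))
          + ∑ k : {x // x ∈ C}, B p k * (A ^ t) k q := by
    intro t p q
    rw [pow_succ', Matrix.mul_apply]
    have h1 : ∑ l, Ω (p : Fin n) l * (Ω ^ t) l (q : Fin n)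
        = ∑ l ∈ C ∪ T, Ω (p : Fin n) l * (Ω ^ t) l (q : Fin n) := by
      refine (Finset.sum_subset (Finset.subset_univ _) ?_).symm
      intro l _ hl
      rw [Finset.mem_union] at hl
      push_neg at hl
      rw [haux1 t l hl.1 hl.2 (q : Fin n) (Or.inl q.2), mul_zero]
    rw [h1, Finset.sum_union hdisj]
    have hCpart : ∑ l ∈ C, Ω (p : Fin n) l * (Ω ^ t) l (q : Fin n)
        = ∑ k : {x // x ∈ C}, B p k * (A ^ t) k q := by
      rw [← Finset.sum_coe_sort C (fun l => Ω (p : Fin n) l * (Ω ^ t) l (q : Fin n))]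
      refine Finset.sum_congr rfl fun l _ => ?_
      rw [haux3 t l q]
      rfl
    have hTpart : ∑ l ∈ T, Ω (p : Fin n) l * (Ω ^ t) l (q : Fin n)
        = ∑ k : {x // x ∈ T}, Te p k * (Ω ^ t) (k : Fin n) (q : Fin n) :=
      (Finset.sum_coe_sort T (fun l => Ω (p : Fin n) l * (Ω ^ t) l (q : Fin n))).symm
    rw [hCpart, hTpart, add_comm]
  -- closed form for the (T, C) block of Ω^t
  have hform : ∀ (t : ℕ) (p : {x // x ∈ T}) (q : {x // x ∈ C}),
      (Ω ^ t) (p : Fin n) (q : Fin n)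
        = ∑ s ∈ Finset.range t, (Te ^ s * B * A ^ (t - 1 - s)) p q := by
    intro t
    induction t with
    | zero =>
        intro p q
        rw [pow_zero, Finset.range_zero, Finset.sum_empty]
        apply Matrix.one_apply_ne
        intro h
        have hq : (p : Fin n) ∈ C := h ▸ q.2
        exact (Finset.disjoint_left.mp hdisj hq) p.2
    | succ t ih =>
        intro p q
        rw [hrec t p q, Finset.sum_range_succ']
        congr 1
        · have h5 : ∀ k : {x // x ∈ T}, Te p k * (Ω ^ t) (k : Fin n) (q : Fin n)
              = Te p k * ∑ s ∈ Finset.range t, (Te ^ s * B * A ^ (t - 1 - s)) k q :=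
            fun k => by rw [ih k q]
          rw [Finset.sum_congr rfl fun k _ => h5 k]
          simp only [Finset.mul_sum]
          rw [Finset.sum_comm]
          refine Finset.sum_congr rfl fun s _ => ?_
          have he : t + 1 - 1 - (s + 1) = t - 1 - s := by omega
          rw [he, ← Matrix.mul_apply]
          congr 1
          rw [← Matrix.mul_assoc, ← Matrix.mul_assoc, ← pow_succ']
        · have he : t + 1 - 1 - 0 = t := by omega
          rw [he, pow_zero, Matrix.one_mul, Matrix.mul_apply]
  -- the total mass of Te^s
  set W : ℕ → ℝ := fun s => ∑ p : {x // x ∈ T}, ∑ q : {x // x ∈ T}, (Te ^ s) p q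
    with hW_def
  have hW0 : ∀ s, 0 ≤ W s := fun s =>
    Finset.sum_nonneg fun p _ => Finset.sum_nonneg fun q _ => (hTp s).1 p q
  have hWrow : ∀ (s : ℕ) (p : {x // x ∈ T}), ∑ q, (Te ^ s) p q ≤ W s := fun s p =>
    Finset.single_le_sum (f := fun r => ∑ q, (Te ^ s) r q)
      (fun r _ => Finset.sum_nonneg fun q _ => (hTp s).1 r q) (Finset.mem_univ p)
  have hWentry : ∀ (s : ℕ) (p q : {x // x ∈ T}), (Te ^ s) p q ≤ W s := fun s p q =>
    le_trans (Finset.single_le_sum (fun r _ => (hTp s).1 p r) (Finset.mem_univ q))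
      (hWrow s p)
  have hWsub : ∀ a c : ℕ, W (a + c) ≤ W a * W c := by
    intro a c
    have h1 : W (a + c) = ∑ p, ∑ m, (Te ^ a) p m * ∑ q, (Te ^ c) m q := by
      simp only [hW_def, pow_add, Matrix.mul_apply]
      refine Finset.sum_congr rfl fun p _ => ?_
      rw [Finset.sum_comm]
      simp [Finset.mul_sum]
    rw [h1]
    calc ∑ p, ∑ m, (Te ^ a) p m * ∑ q, (Te ^ c) m q
        ≤ ∑ p, ∑ m, (Te ^ a) p m * W c := by
          refine Finset.sum_le_sum fun p _ => Finset.sum_le_sum fun m _ => ?_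
          exact mul_le_mul_of_nonneg_left (hWrow c m) ((hTp a).1 p m)
      _ = W a * W c := by
          simp only [← Finset.sum_mul]
          rfl
  have hWlim : Tendsto W atTop (𝓝 0) := by
    have h := tendsto_finset_sum (Finset.univ : Finset {x // x ∈ T})
      (fun p _ => tendsto_finset_sum (Finset.univ : Finset {x // x ∈ T})
        (fun q _ => hTe p q))
    simpa only [Finset.sum_const_zero] using h
  obtain ⟨N, hN1, hWN⟩ : ∃ N : ℕ, 1 ≤ N ∧ W N ≤ 1 / 2 := by
    obtain ⟨N0, hN0⟩ := eventually_atTop.mp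
      (hWlim.eventually (gt_mem_nhds (by norm_num : (0 : ℝ) < 1 / 2)))
    exact ⟨N0 + 1, Nat.le_add_left 1 N0, (hN0 (N0 + 1) (Nat.le_add_right N0 1)).le⟩
  have hWgeo : ∀ Q v : ℕ, W (Q * N + v) ≤ (1 / 2 : ℝ) ^ Q * W v := by
    intro Q
    induction Q with
    | zero => intro v; simp
    | succ Q ih =>
        intro v
        have harith : (Q + 1) * N + v = N + (Q * N + v) := by ring
        rw [harith]
        calc W (N + (Q * N + v)) ≤ W N * W (Q * N + v) := hWsub N (Q * N + v)
          _ ≤ (1 / 2) * ((1 / 2 : ℝ) ^ Q * W v) :=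
              mul_le_mul hWN (ih v) (hW0 _) (by norm_num)
          _ = (1 / 2 : ℝ) ^ (Q + 1) * W v := by ring
  obtain ⟨c, hWle_c, hc0⟩ : ∃ c : ℝ, (∀ v, W v ≤ c) ∧ 0 ≤ c := by
    refine ⟨(Fintype.card {x // x ∈ T} : ℝ), fun v => ?_, Nat.cast_nonneg _⟩
    calc W v ≤ ∑ _p : {x // x ∈ T}, (1 : ℝ) :=
          Finset.sum_le_sum fun p _ => (hTp v).2 p
      _ = (Fintype.card {x // x ∈ T} : ℝ) := by simp
  have hNc0 : 0 ≤ (N : ℝ) * c := mul_nonneg (Nat.cast_nonneg _) hc0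
  have hblock : ∀ Q : ℕ, ∑ s ∈ Finset.range (Q * N), W s
      ≤ (∑ q ∈ Finset.range Q, (1 / 2 : ℝ) ^ q) * ((N : ℝ) * c) := by
    intro Q
    induction Q with
    | zero => simp
    | succ Q ih =>
        have h1 : (Q + 1) * N = Q * N + N := by ring
        conv_lhs => rw [h1, Finset.sum_range_add]
        rw [Finset.sum_range_succ, add_mul]
        refine add_le_add ih ?_
        calc ∑ v ∈ Finset.range N, W (Q * N + v)
            ≤ ∑ v ∈ Finset.range N, (1 / 2 : ℝ) ^ Q * W v :=
              Finset.sum_le_sum fun v _ => hWgeo Q v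
          _ ≤ ∑ _v ∈ Finset.range N, (1 / 2 : ℝ) ^ Q * c :=
              Finset.sum_le_sum fun v _ =>
                mul_le_mul_of_nonneg_left (hWle_c v) (by positivity)
          _ = (1 / 2 : ℝ) ^ Q * ((N : ℝ) * c) := by
              rw [Finset.sum_const, Finset.card_range, nsmul_eq_mul]
              ring
  have hWsummable : Summable W := by
    refine summable_of_sum_range_le hW0 (c := 2 * ((N : ℝ) * c)) fun m => ?_
    calc ∑ s ∈ Finset.range m, W s ≤ ∑ s ∈ Finset.range (m * N), W s := by
          refine Finset.sum_le_sum_of_subset_of_nonneg ?_ fun k _ _ => hW0 k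
          exact Finset.range_subset_range.mpr (Nat.le_mul_of_pos_right m (by omega))
      _ ≤ (∑ q ∈ Finset.range m, (1 / 2 : ℝ) ^ q) * ((N : ℝ) * c) := hblock m
      _ ≤ 2 * ((N : ℝ) * c) :=
          mul_le_mul_of_nonneg_right (sum_geometric_two_le m) hNc0
  -- the summands and their limits
  set f : ℕ → ℕ → ℝ :=
    fun t s => if s < t then (Te ^ s * B * A ^ (t - 1 - s)) i j else 0 with hf_def
  set g : ℕ → ℝ := fun s => πc j * ((Te ^ s).mulVec b) i with hg_def
  have hfg : ∀ s : ℕ, Tendsto (fun t => f t s) atTop (𝓝 (g s)) := by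
    intro s
    have h1 : ∀ u : ℕ, (Te ^ s * B * A ^ u) i j
        = ∑ k : {x // x ∈ C}, (Te ^ s * B) i k * (A ^ u) k j :=
      fun u => Matrix.mul_apply
    have h2 : Tendsto (fun u : ℕ => ∑ k : {x // x ∈ C}, (Te ^ s * B) i k * (A ^ u) k j)
        atTop (𝓝 (∑ k : {x // x ∈ C}, (Te ^ s * B) i k * πc j)) :=
      tendsto_finset_sum _ (fun k _ => (hC_limit k j).const_mul _)
    have h3 : ∑ k : {x // x ∈ C}, (Te ^ s * B) i k * πc j = g s := by
      rw [hg_def]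
      simp only
      rw [← Finset.sum_mul, mul_comm]
      congr 1
      calc ∑ k : {x // x ∈ C}, (Te ^ s * B) i k
          = ∑ k : {x // x ∈ C}, ∑ l, (Te ^ s) i l * B l k := by
            simp [Matrix.mul_apply]
        _ = ∑ l, (Te ^ s) i l * ∑ k, B l k := by
            rw [Finset.sum_comm]
            simp [Finset.mul_sum]
        _ = ∑ l, (Te ^ s) i l * b l := by
            refine Finset.sum_congr rfl fun l _ => ?_
            rw [hbB l]
        _ = ((Te ^ s).mulVec b) i := rfl
    have hlim1 : Tendsto (fun u : ℕ => (Te ^ s * B * A ^ u) i j) atTop (𝓝 (g s)) := by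
      rw [← h3]
      exact h2.congr (fun u => (h1 u).symm)
    have h4 : Tendsto (fun t : ℕ => (Te ^ s * B * A ^ (t - (s + 1))) i j) atTop (𝓝 (g s)) :=
      hlim1.comp (tendsto_sub_atTop_nat (s + 1))
    refine Tendsto.congr' ?_ h4
    filter_upwards [eventually_ge_atTop (s + 1)] with t ht
    rw [hf_def]
    simp only
    rw [if_pos (by omega : s < t)]
    have he : t - (s + 1) = t - 1 - s := by omega
    rw [he]
  have hbound : ∀ t s : ℕ, |f t s| ≤ W s := by
    intro t s
    rw [hf_def]
    simp only
    split_ifs with hst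
    · have hnn : 0 ≤ (Te ^ s * B * A ^ (t - 1 - s)) i j := by
        rw [Matrix.mul_apply]
        refine Finset.sum_nonneg fun k _ => mul_nonneg ?_ ((hAp _).1 k j)
        rw [Matrix.mul_apply]
        exact Finset.sum_nonneg fun l _ => mul_nonneg ((hTp s).1 i l) (hB0 l k)
      rw [abs_of_nonneg hnn]
      have hBA : ∀ m : {x // x ∈ T}, (B * A ^ (t - 1 - s)) m j ≤ 1 := by
        intro m
        rw [Matrix.mul_apply]
        calc ∑ l, B m l * (A ^ (t - 1 - s)) l j ≤ ∑ l, B m l * 1 :=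
              Finset.sum_le_sum fun l _ =>
                mul_le_mul_of_nonneg_left (hApow_le1 _ l j) (hB0 m l)
          _ = ∑ l, B m l := by simp
          _ ≤ 1 := hBrow m
      calc (Te ^ s * B * A ^ (t - 1 - s)) i j
          = ∑ m, (Te ^ s) i m * (B * A ^ (t - 1 - s)) m j := by
            rw [Matrix.mul_assoc, Matrix.mul_apply]
        _ ≤ ∑ m, (Te ^ s) i m * 1 :=
            Finset.sum_le_sum fun m _ =>
              mul_le_mul_of_nonneg_left (hBA m) ((hTp s).1 i m)
        _ = ∑ m, (Te ^ s) i m := by simp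
        _ ≤ W s := hWrow s i
    · rw [abs_zero]
      exact hW0 s
  have hmain : Tendsto (fun t => ∑' s, f t s) atTop (𝓝 (∑' s, g s)) :=
    tendsto_tsum_of_dominated_convergence hWsummable hfg
      (Eventually.of_forall fun t s => by
        simpa [Real.norm_eq_abs] using hbound t s)
  -- identify (Ω^t) i j with ∑' s, f t s
  have hts : ∀ t : ℕ, (Ω ^ t) (i : Fin n) (j : Fin n) = ∑' s, f t s := by
    intro t
    rw [hform t i j]
    have h0 : ∑' s, f t s = ∑ s ∈ Finset.range t, f t s :=
      tsum_eq_sum (fun s hs => by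
        rw [hf_def]
        simp only
        exact if_neg (by simpa using hs))
    rw [h0]
    refine Finset.sum_congr rfl fun s hs => ?_
    rw [hf_def]
    simp only
    rw [if_pos (Finset.mem_range.mp hs)]
  -- summability of entries of Te^s
  have hEsum : ∀ p q : {x // x ∈ T}, Summable (fun s => (Te ^ s) p q) := fun p q =>
    Summable.of_nonneg_of_le (fun s => (hTp s).1 p q) (fun s => hWentry s p q) hWsummable
  -- the Neumann series
  set M : Matrix {x // x ∈ T} {x // x ∈ T} ℝ :=
    Matrix.of (fun p q => ∑' s, (Te ^ s) p q) with hM_def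
  have hright : (1 - Te) * M = 1 := by
    ext p q
    rw [Matrix.mul_apply]
    have h1 : ∀ k, (1 - Te) p k * M k q = ∑' s, (1 - Te) p k * (Te ^ s) k q := fun k =>
      tsum_mul_left.symm
    rw [Finset.sum_congr rfl fun k _ => h1 k,
      ← Summable.tsum_finsetSum (fun k _ => (hEsum k q).mul_left _)]
    have h2 : ∀ s : ℕ, ∑ k, (1 - Te) p k * (Te ^ s) k q
        = (Te ^ s) p q - (Te ^ (s + 1)) p q := by
      intro s
      rw [← Matrix.mul_apply, sub_mul, Matrix.one_mul, ← pow_succ', Matrix.sub_apply]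
    have h3 : Summable (fun s => (Te ^ (s + 1)) p q) :=
      (summable_nat_add_iff (f := fun s => (Te ^ s) p q) 1).mpr (hEsum p q)
    rw [tsum_congr h2, Summable.tsum_sub (hEsum p q) h3]
    have h4 : ∑' s, (Te ^ (s + 1)) p q = (∑' s, (Te ^ s) p q) - (Te ^ 0) p q := by
      have h5 := (hEsum p q).sum_add_tsum_nat_add 1
      simp only [Finset.sum_range_one] at h5
      linarith
    rw [h4, pow_zero]
    show (∑' s, (Te ^ s) p q) - ((∑' s, (Te ^ s) p q) - (1 : Matrix _ _ ℝ) p q)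
      = (1 : Matrix _ _ ℝ) p q
    ring
  have hMinv : (1 - Te)⁻¹ = M := Matrix.inv_eq_right_inv hright
  have hμci : μc i = ∑' s, ((Te ^ s).mulVec b) i := by
    rw [hμc, hMinv]
    calc (M.mulVec b) i = ∑ k, M i k * b k := rfl
      _ = ∑ k, ∑' s, (Te ^ s) i k * b k := by
          refine Finset.sum_congr rfl fun k _ => ?_
          rw [hM_def]
          exact tsum_mul_right.symm
      _ = ∑' s, ∑ k, (Te ^ s) i k * b k :=
          (Summable.tsum_finsetSum (fun k _ => (hEsum i k).mul_right _)).symm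
      _ = ∑' s, ((Te ^ s).mulVec b) i := rfl
  have hgsum_eq : ∑' s, g s = πc j * μc i := by
    rw [hg_def]
    simp only
    rw [tsum_mul_left, hμci]
  refine Tendsto.congr (fun t => (hts t).symm) ?_
  rw [← hgsum_eq]
  exact hmain
end
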